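/- Let z and w be integers with R ≤ z ≤ R + 2^r − 1 and R ≤ w ≤ R + 2^r − 1, and let Q be a real number with Q > 1/2 + Σ_{i=1}^k q_i. Then for any fixed strategy (w, w_0) of Player W, every maximizer (z, z_0, z_1, …, z_k) of Player Z's payoff Π_Z over Player Z's strategy set X_Z satisfies z = w. (The key inequality is z·(2w − z) = w² − (w − z)² ≤ w² − 1 whenever z ≠ w, so the term Q·z·(2w − z) dominates the remaining part of the payoff, which lies between 0 and 1/2 + Σ_{i=1}^k q_i.) -/
import Mathlib


open MeasureTheory

noncomputable section

/-- Player Z's strategy set `X_Z`: tuples `(z, z₀, (z₁,…,z_k))` with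
`R ≤ z ≤ R + 2^r − 1`, each `zᵢ ∈ {0,1}`, and `(1/2)·z₀ + Σᵢ qᵢ·zᵢ ≤ z`. -/
def inXZ (k : ℕ) (q : Fin k → ℕ) (R r : ℕ) (s : ℤ × ℤ × (Fin k → ℤ)) : Prop :=
  (R : ℤ) ≤ s.1 ∧ s.1 ≤ (R : ℤ) + 2 ^ r - 1 ∧
  (s.2.1 = 0 ∨ s.2.1 = 1) ∧ (∀ i, s.2.2 i = 0 ∨ s.2.2 i = 1) ∧
  (1 / 2 : ℝ) * (s.2.1 : ℝ) + ∑ i, (q i : ℝ) * (s.2.2 i : ℝ) ≤ (s.1 : ℝ)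

/-- Player W's strategy set `X_W`: pairs `(w, w₀)` with `R ≤ w ≤ R + 2^r − 1`,
`w` an integer and `w₀` an arbitrary real number. -/
def inXW (R r : ℕ) (t : ℤ × ℝ) : Prop :=
  (R : ℤ) ≤ t.1 ∧ t.1 ≤ (R : ℤ) + 2 ^ r - 1

/-- Player Z's payoff `Π_Z = (1/2)·z₀ + Σᵢ qᵢ·zᵢ + Q·z·(2w − z)`. -/
def payZ (k : ℕ) (q : Fin k → ℕ) (Q : ℝ) (s : ℤ × ℤ × (Fin k → ℤ)) (t : ℤ × ℝ) : ℝ :=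
  (1 / 2 : ℝ) * (s.2.1 : ℝ) + ∑ i, (q i : ℝ) * (s.2.2 i : ℝ)
    + Q * (s.1 : ℝ) * (2 * (t.1 : ℝ) - (s.1 : ℝ))

/-- Player W's payoff `Π_W = (1 − z₀)·w₀`. -/
def payW (k : ℕ) (s : ℤ × ℤ × (Fin k → ℤ)) (t : ℤ × ℝ) : ℝ :=
  (1 - (s.2.1 : ℝ)) * t.2

/-- for a fixed strategy `(w, w₀) ∈ X_W` of Player W, if
`Q > 1/2 + Σᵢ qᵢ`, every maximizer of Player Z's payoff over `X_Z` has `z = w`. -/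
theorem stmt0 (k : ℕ) (q : Fin k → ℕ) (R r : ℕ) (Q : ℝ)
    (hq : ∀ i, 0 < q i) (hR : 0 < R) (hr : 0 < r) (hrk : r ≤ k)
    (hQ : Q > 1 / 2 + ∑ i, (q i : ℝ))
    (t : ℤ × ℝ) (ht : inXW R r t)
    (s : ℤ × ℤ × (Fin k → ℤ)) (hs : inXZ k q R r s)
    (hmax : ∀ s' : ℤ × ℤ × (Fin k → ℤ), inXZ k q R r s' →
      payZ k q Q s' t ≤ payZ k q Q s t) :
    s.1 = t.1 := by
  by_contra hne
  obtain ⟨hw1, hw2⟩ := ht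
  obtain ⟨hz1, hz2, hz0, hzi, hzsum⟩ := hs
  -- compare with strategy (t.1, 0, 0)
  have hs' : inXZ k q R r (t.1, 0, fun _ => 0) := by
    refine ⟨hw1, hw2, Or.inl rfl, fun i => Or.inl rfl, ?_⟩
    simp only [Int.cast_zero, mul_zero, Finset.sum_const_zero, add_zero]
    have : (0:ℝ) < (R:ℝ) := by exact_mod_cast hR
    have : (R:ℝ) ≤ (t.1:ℝ) := by exact_mod_cast hw1
    linarith
  have hle := hmax _ hs'
  simp only [payZ, Int.cast_zero, mul_zero, Finset.sum_const_zero, add_zero, zero_add] at hle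
  -- bounds on the linear part of s
  have hsum : ∀ i ∈ Finset.univ, (q i : ℝ) * (s.2.2 i : ℝ) ≤ (q i : ℝ) := by
    intro i _
    rcases hzi i with h | h <;> simp [h]
    all_goals positivity
  have hL : (1 / 2 : ℝ) * (s.2.1 : ℝ) + ∑ i, (q i : ℝ) * (s.2.2 i : ℝ)
      ≤ 1 / 2 + ∑ i, (q i : ℝ) := by
    have h1 : (s.2.1 : ℝ) ≤ 1 := by rcases hz0 with h | h <;> simp [h]
    have := Finset.sum_le_sum hsum
    linarith
  -- (w - z)^2 ≥ 1
  have hd : (1 : ℝ) ≤ ((t.1 : ℝ) - (s.1 : ℝ)) ^ 2 := by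
    have h1 : (1 : ℤ) ≤ (t.1 - s.1) ^ 2 := by
      rcases lt_or_gt_of_ne (fun h => hne h.symm) with h | h
      · nlinarith
      · nlinarith
    calc (1:ℝ) ≤ (((t.1 - s.1 : ℤ) : ℝ)) ^ 2 := by exact_mod_cast h1
    _ = ((t.1 : ℝ) - (s.1 : ℝ)) ^ 2 := by push_cast; ring
  have hQ0 : 0 < Q := by
    have : (0:ℝ) ≤ ∑ i, (q i : ℝ) := by positivity
    linarith
  nlinarith [hle, hL, hd, hQ0, mul_le_mul_of_nonneg_left hd hQ0.le]
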